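/- Let E be a finitely generated abelian group and let G be a finite group acting on a finite set X. Let μℂ be a ℚ-valued function on the set of abelian subgroups of G satisfying, for every abelian subgroup A ≤ G, Σ_{B abelian, A ≤ B ≤ G} μℂ(B) = |X^A|, and let μ𝒜 be a ℚ-valued function on the set of abelian subgroups of G satisfying, for every abelian subgroup A ≤ G, Σ_{B abelian, A ≤ B ≤ G} μ𝒜(B) = 1. Then χ_E(X;G) = Σ_{B} (|B|/|G|) · |Hom(E,B)| · μℂ(B) = Σ_{A} (|A|/|G|) · μ𝒜(A) · χ_E(X;A), where both sums run over all abelian subgroups of G, Hom(E,B) is the set of group homomorphisms E → B, and χ_E(X;A) is computed with respect to the restricted action of A on X. -/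

import Mathlib

open Multiplicative

section Aux

variable {G : Type*} [Group G]

/-- Homs into a subgroup correspond to homs with range in the subgroup. -/
def monoidHomRangeEquiv (K : Type*) [Group K] (B : Subgroup G) :
    (K →* ↥B) ≃ {φ : K →* G // φ.range ≤ B} where
  toFun ψ := ⟨B.subtype.comp ψ, by
    rintro x hx
    obtain ⟨k, rfl⟩ := MonoidHom.mem_range.mp hx
    exact SetLike.coe_mem (ψ k)⟩
  invFun φ := (φ : K →* G).codRestrict B (fun k => φ.2 (MonoidHom.mem_range.mpr ⟨k, rfl⟩))
  left_inv ψ := by ext k; rfl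
  right_inv φ := by ext k; rfl

lemma prod_hom_decomp {E H : Type*} [Group E] [Group H]
    (φ : (E × Multiplicative ℤ) →* H) (e : E) (z : Multiplicative ℤ) :
    φ (e, z) = φ (e, 1) * (φ (1, ofAdd 1)) ^ (toAdd z) := by
  rw [← map_zpow, ← map_mul]
  congr 1
  refine Prod.ext ?_ ?_
  · simp
  · show z = (1 : Multiplicative ℤ) * (ofAdd 1) ^ (toAdd z)
    rw [one_mul, ← ofAdd_zsmul, smul_eq_mul, mul_one, ofAdd_toAdd]

/-- Homs from `E × ℤ` into a group with commuting pair behaviour. -/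
def prodHomEquivOfComm {E B : Type*} [CommGroup E] [Group B]
    (comm : ∀ a b : B, a * b = b * a) :
    ((E × Multiplicative ℤ) →* B) ≃ (E →* B) × B where
  toFun ψ := (ψ.comp (MonoidHom.inl E (Multiplicative ℤ)), ψ (1, ofAdd 1))
  invFun p :=
    { toFun := fun k => p.1 k.1 * p.2 ^ (toAdd k.2)
      map_one' := by simp
      map_mul' := by
        rintro ⟨e1, z1⟩ ⟨e2, z2⟩
        show p.1 (e1 * e2) * p.2 ^ (toAdd (z1 * z2)) = _
        rw [map_mul, toAdd_mul, zpow_add]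
        rw [mul_assoc (p.1 e1), ← mul_assoc (p.1 e2), comm (p.1 e2), mul_assoc,
          ← mul_assoc] }
  left_inv ψ := by
    ext k
    obtain ⟨e, z⟩ := k
    exact (prod_hom_decomp ψ e z).symm
  right_inv p := by
    obtain ⟨f, b⟩ := p
    refine Prod.ext ?_ ?_
    · ext e
      show f e * b ^ (toAdd (1 : Multiplicative ℤ)) = f e
      simp
    · simp


lemma finite_monoidHom_of_closure {K H : Type*} [Group K] [Group H] [Finite H]
    {S : Set K} (hfin : S.Finite) (hS : Subgroup.closure S = ⊤) : Finite (K →* H) := by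
  have : Finite ↥S := hfin
  refine Finite.of_injective (fun φ : K →* H => (fun s : S => φ s)) ?_
  intro φ ψ h
  exact MonoidHom.eq_of_eqOn_dense hS (fun s hs => congrFun h ⟨s, hs⟩)

instance fgHomFinite {E H : Type*} [Group E] [Group.FG E] [Group H] [Finite H] :
    Finite (E →* H) := by
  obtain ⟨S, hS, hfin⟩ := Group.fg_iff.mp ‹Group.FG E›
  exact finite_monoidHom_of_closure hfin hS

instance prodHomFinite {E H : Type*} [Group E] [Group.FG E] [Group H] [Finite H] :
    Finite ((E × Multiplicative ℤ) →* H) := by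
  refine Finite.of_injective (fun φ : (E × Multiplicative ℤ) →* H =>
    (φ.comp (MonoidHom.inl E (Multiplicative ℤ)), φ (1, ofAdd 1))) ?_
  intro φ ψ h
  obtain ⟨h1, h2⟩ := Prod.ext_iff.mp h
  dsimp only at h1 h2
  ext k
  obtain ⟨e, z⟩ := k
  rw [prod_hom_decomp φ e z, prod_hom_decomp ψ e z, h2]
  congr 1
  exact congrArg (fun f : E →* H => f e) h1

instance subgroupFinite' [Finite G] : Finite (Subgroup G) :=
  Finite.of_injective (fun H : Subgroup G => (H : Set G)) SetLike.coe_injective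

end Aux

/-- The generalized orbifold Euler characteristic `χ_K(X;G)` associated to a group `K`:
`(1/|G|) Σ_{φ ∈ Hom(K×ℤ,G)} |X^{⟨φ⟩}|`. -/
noncomputable def chiGen (K : Type*) [Group K] (G : Type*) [Group G] (X : Type*)
    [MulAction G X] : ℚ :=
  (Nat.card G : ℚ)⁻¹ *
    ∑ᶠ φ : (K × Multiplicative ℤ) →* G,
      (Nat.card {x : X // ∀ k, φ k • x = x} : ℚ)

/-- A subgroup is abelian if all its elements commute. -/
def Subgroup.IsAbelian {G : Type*} [Group G] (H : Subgroup G) : Prop :=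
  ∀ a ∈ H, ∀ b ∈ H, a * b = b * a

/-- **Proposition 2-3.** For a finitely generated abelian group `E`, with the abelian Möbius
functions `μℂ` (with `Σ_{A≤B abelian} μℂ(B) = |X^A|`) and `μ𝒜` (with
`Σ_{A≤B abelian} μ𝒜(B) = 1`), one has
`χ_E(X;G) = Σ_B (|B|/|G|)·|Hom(E,B)|·μℂ(B) = Σ_A (|A|/|G|)·μ𝒜(A)·χ_E(X;A)`,
the sums being over the abelian subgroups of `G`. -/
theorem chiGen_abelian_moebius (E : Type) [CommGroup E] [Group.FG E]
    (G X : Type) [Group G] [Finite G] [MulAction G X] [Finite X]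
    (μC μA : Subgroup G → ℚ)
    (hC : ∀ A : Subgroup G, A.IsAbelian →
      (∑ᶠ (B : Subgroup G) (_ : B.IsAbelian ∧ A ≤ B), μC B) =
        (Nat.card (MulAction.fixedPoints A X) : ℚ))
    (hA : ∀ A : Subgroup G, A.IsAbelian →
      (∑ᶠ (B : Subgroup G) (_ : B.IsAbelian ∧ A ≤ B), μA B) = 1) :
    chiGen E G X =
        ∑ᶠ (B : Subgroup G) (_ : B.IsAbelian),
          (Nat.card B : ℚ) / (Nat.card G : ℚ) * (Nat.card (E →* B) : ℚ) * μC B ∧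
      chiGen E G X =
        ∑ᶠ (A : Subgroup G) (_ : A.IsAbelian),
          (Nat.card A : ℚ) / (Nat.card G : ℚ) * μA A * chiGen E A X := by
  classical
  letI : Fintype ((E × Multiplicative ℤ) →* G) := Fintype.ofFinite _
  letI : Fintype (Subgroup G) := Fintype.ofFinite _
  set F : ((E × Multiplicative ℤ) →* G) → ℚ :=
    fun φ => (Nat.card {x : X // ∀ k, φ k • x = x} : ℚ) with hF
  -- ranges are abelian
  have habrange : ∀ φ : (E × Multiplicative ℤ) →* G, (φ.range).IsAbelian := by
    intro φ a ha b hb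
    obtain ⟨k, rfl⟩ := MonoidHom.mem_range.mp ha
    obtain ⟨l, rfl⟩ := MonoidHom.mem_range.mp hb
    rw [← map_mul, ← map_mul, mul_comm]
  -- fixed point counting
  have cardfix : ∀ φ : (E × Multiplicative ℤ) →* G,
      Nat.card {x : X // ∀ k, φ k • x = x} = Nat.card (MulAction.fixedPoints φ.range X) := by
    intro φ
    apply Nat.card_congr
    apply Equiv.subtypeEquivRight
    intro x
    constructor
    · rintro h ⟨g, hg⟩
      obtain ⟨k, rfl⟩ := MonoidHom.mem_range.mp hg
      exact h k
    · intro h k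
      exact h ⟨φ k, MonoidHom.mem_range.mpr ⟨k, rfl⟩⟩
  -- F φ as a finset sum via μC
  have hFC : ∀ φ : (E × Multiplicative ℤ) →* G, F φ = ∑ B ∈ Finset.univ.filter
      (fun B : Subgroup G => B.IsAbelian ∧ φ.range ≤ B), μC B := by
    intro φ
    rw [hF]
    dsimp only
    rw [cardfix φ, ← hC φ.range (habrange φ)]
    exact (finsum_cond_eq_sum_of_cond_iff
      (p := fun B : Subgroup G => B.IsAbelian ∧ φ.range ≤ B)
      (t := Finset.univ.filter (fun B : Subgroup G => B.IsAbelian ∧ φ.range ≤ B))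
      μC (fun {B} _ => by simp))
  -- μA sums to one over abelian supergroups of a range
  have hμA1 : ∀ φ : (E × Multiplicative ℤ) →* G,
      ∑ A ∈ Finset.univ.filter (fun A : Subgroup G => A.IsAbelian ∧ φ.range ≤ A), μA A = 1 := by
    intro φ
    rw [← hA φ.range (habrange φ)]
    exact (finsum_cond_eq_sum_of_cond_iff
      (p := fun A : Subgroup G => A.IsAbelian ∧ φ.range ≤ A)
      (t := Finset.univ.filter (fun A : Subgroup G => A.IsAbelian ∧ φ.range ≤ A))
      μA (fun {B} _ => by simp)).symm
  -- counting homs with range in an abelian subgroup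
  have key1 : ∀ B : Subgroup G, B.IsAbelian →
      ((Finset.univ.filter
        (fun φ : (E × Multiplicative ℤ) →* G => φ.range ≤ B)).card : ℚ)
        = (Nat.card (E →* ↥B) : ℚ) * (Nat.card ↥B : ℚ) := by
    intro B hB
    have comm : ∀ a b : ↥B, a * b = b * a := fun a b => Subtype.ext (hB a a.2 b b.2)
    have h1 : (Finset.univ.filter
        (fun φ : (E × Multiplicative ℤ) →* G => φ.range ≤ B)).card
        = Nat.card {φ : (E × Multiplicative ℤ) →* G // φ.range ≤ B} := by
      rw [Nat.card_eq_fintype_card, Fintype.card_subtype]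
    rw [h1, ← Nat.card_congr (monoidHomRangeEquiv (E × Multiplicative ℤ) B),
      Nat.card_congr (prodHomEquivOfComm comm), Nat.card_prod, Nat.cast_mul]
  -- chiGen over G as a finset sum
  have chiG : chiGen E G X = (Nat.card G : ℚ)⁻¹ * ∑ φ : (E × Multiplicative ℤ) →* G, F φ := by
    rw [chiGen, finsum_eq_sum_of_fintype]
  -- chiGen over a subgroup as a finset sum
  have chiA : ∀ A : Subgroup G, chiGen E ↥A X = (Nat.card ↥A : ℚ)⁻¹ *
      ∑ φ ∈ Finset.univ.filter
        (fun φ : (E × Multiplicative ℤ) →* G => φ.range ≤ A), F φ := by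
    intro A
    letI : Fintype ((E × Multiplicative ℤ) →* ↥A) := Fintype.ofFinite _
    rw [chiGen, finsum_eq_sum_of_fintype]
    congr 1
    rw [Fintype.sum_equiv (monoidHomRangeEquiv (E × Multiplicative ℤ) A)
      (fun ψ => (Nat.card {x : X // ∀ k, ψ k • x = x} : ℚ))
      (fun p => F p.1) (fun ψ => rfl)]
    exact (Finset.sum_subtype _ (fun φ => by simp) F).symm
  constructor
  · -- first identity
    have sum1 : ∑ φ : (E × Multiplicative ℤ) →* G, F φ
        = ∑ B : Subgroup G, (if B.IsAbelian then
            (Nat.card (E →* ↥B) : ℚ) * (Nat.card ↥B : ℚ) * μC B else 0) := by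
      calc ∑ φ : (E × Multiplicative ℤ) →* G, F φ
          = ∑ φ : (E × Multiplicative ℤ) →* G, ∑ B : Subgroup G,
              if B.IsAbelian ∧ φ.range ≤ B then μC B else 0 := by
            refine Finset.sum_congr rfl fun φ _ => ?_
            rw [hFC φ, Finset.sum_filter]
        _ = ∑ B : Subgroup G, ∑ φ : (E × Multiplicative ℤ) →* G,
              if B.IsAbelian ∧ φ.range ≤ B then μC B else 0 := by
            exact Finset.sum_comm
        _ = _ := by
            refine Finset.sum_congr rfl fun B _ => ?_
            by_cases hB : B.IsAbelian
            · simp only [hB, true_and, if_true]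
              rw [← Finset.sum_filter, Finset.sum_const, nsmul_eq_mul, key1 B hB]
            · simp [hB]
    rw [chiG, sum1, Finset.mul_sum,
      finsum_cond_eq_sum_of_cond_iff
        (p := fun B : Subgroup G => B.IsAbelian)
        (t := Finset.univ.filter (fun B : Subgroup G => B.IsAbelian))
        _ (fun {B} _ => by simp),
      Finset.sum_filter]
    refine Finset.sum_congr rfl fun B _ => ?_
    by_cases hB : B.IsAbelian
    · simp only [hB, if_true]
      rw [div_eq_mul_inv]
      ring
    · simp [hB]
  · -- second identity
    have sum2 : ∑ᶠ (A : Subgroup G) (_ : A.IsAbelian),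
        (Nat.card A : ℚ) / (Nat.card G : ℚ) * μA A * chiGen E A X
        = ∑ A : Subgroup G, ∑ φ : (E × Multiplicative ℤ) →* G,
            if A.IsAbelian ∧ φ.range ≤ A then (Nat.card G : ℚ)⁻¹ * μA A * F φ else 0 := by
      rw [finsum_cond_eq_sum_of_cond_iff
        (p := fun A : Subgroup G => A.IsAbelian)
        (t := Finset.univ.filter (fun A : Subgroup G => A.IsAbelian))
        _ (fun {A} _ => by simp),
        Finset.sum_filter]
      refine Finset.sum_congr rfl fun A _ => ?_
      by_cases hAb : A.IsAbelian
      · simp only [hAb, true_and, if_true]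
        rw [chiA A]
        have hcA : (Nat.card ↥A : ℚ) ≠ 0 :=
          Nat.cast_ne_zero.mpr Nat.card_pos.ne'
        rw [Finset.mul_sum, Finset.mul_sum, ← Finset.sum_filter]
        refine Finset.sum_congr rfl fun φ _ => ?_
        field_simp
      · simp [hAb]
    rw [sum2, Finset.sum_comm, chiG, Finset.mul_sum]
    refine (Finset.sum_congr rfl fun φ _ => ?_).symm
    calc ∑ A : Subgroup G, (if A.IsAbelian ∧ φ.range ≤ A
            then (Nat.card G : ℚ)⁻¹ * μA A * F φ else 0)
        = ∑ A ∈ Finset.univ.filter (fun A : Subgroup G => A.IsAbelian ∧ φ.range ≤ A),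
            (Nat.card G : ℚ)⁻¹ * μA A * F φ := (Finset.sum_filter _ _).symm
      _ = (Nat.card G : ℚ)⁻¹ * F φ *
            ∑ A ∈ Finset.univ.filter (fun A : Subgroup G => A.IsAbelian ∧ φ.range ≤ A),
              μA A := by rw [Finset.mul_sum]; exact Finset.sum_congr rfl fun A _ => by ring
      _ = (Nat.card G : ℚ)⁻¹ * F φ := by rw [hμA1 φ, mul_one]
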